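/- Let G be a topological group acting continuously by isometries on a metric space (X, ρ), and suppose the action is bounded. Let L_0(I, G) be the group of measurable maps from the unit interval with Lebesgue measure to G with the topology of convergence in measure, acting pointwise on the space L_0(I, X) of measurable maps I → X equipped with the metric me_λ(f,g) = inf{ ε > 0 : μ{x : ρ(f(x), g(x)) > ε} < λε } for some fixed λ > 0. Then this pointwise action of L_0(I, G) on L_0(I, X) is by isometries and is continuous. -/

import Mathlib

open MeasureTheory

/-- Lebesgue measure on the unit interval I = [0,1]. -/
noncomputable def unitIntervalMeasure : Measure ℝ :=
  volume.restrict (Set.Icc (0 : ℝ) 1)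

/-- The canonical metric `me_λ` of convergence in measure on maps from the
unit interval to a metric space X:
`me_λ(f,g) = inf { ε > 0 : μ{x : d(f(x),g(x)) > ε} < λ·ε }`. -/
noncomputable def meDist (lam : ℝ) {X : Type*} [MetricSpace X]
    (f g : ℝ → X) : ℝ :=
  sInf {ε : ℝ | 0 < ε ∧
    unitIntervalMeasure {x | ε < dist (f x) (g x)} < ENNReal.ofReal (lam * ε)}

/-- Lemma 2.12: if a topological group G acts continuously,
isometrically and boundedly on a metric space X, then the pointwise action of
L₀(I,G) on L₀(I,X) is by isometries for the metric `me_λ`, and the orbit maps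
are continuous with respect to convergence in measure: the basic neighbourhood
`g·[W, λε/2]` of `g` is mapped into the ε-ball around `g·f`. -/
theorem hartmanMycielski_action_isometric_continuous
    {G X : Type*} [Group G] [TopologicalSpace G] [IsTopologicalGroup G]
    [MetricSpace X] [MulAction G X]
    (hiso : ∀ g : G, Isometry (fun x : X => g • x))
    (hcont : Continuous (fun p : G × X => p.1 • p.2))
    (hbounded : ∀ ε > (0 : ℝ), ∃ W ∈ nhds (1 : G),
      ∀ w ∈ W, ∀ x : X, dist (w • x) x < ε)
    (lam : ℝ) (hlam : 0 < lam) :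
    -- the pointwise action is by isometries of me_λ
    (∀ (g : ℝ → G) (f₁ f₂ : ℝ → X),
      meDist lam (fun t => g t • f₁ t) (fun t => g t • f₂ t) = meDist lam f₁ f₂) ∧
    -- the orbit maps are continuous for the topology of convergence in measure
    (∀ (g : ℝ → G) (f : ℝ → X), ∀ ε > (0 : ℝ), ∃ W ∈ nhds (1 : G),
      ∀ g₁ : ℝ → G,
        unitIntervalMeasure {t | (g t)⁻¹ * g₁ t ∉ W} <
          ENNReal.ofReal (lam * ε / 2) →
        meDist lam (fun t => g₁ t • f t) (fun t => g t • f t) ≤ ε) := by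
  constructor
  · intro g f₁ f₂
    unfold meDist
    congr 1
    ext ε
    have : ∀ t, dist (g t • f₁ t) (g t • f₂ t) = dist (f₁ t) (f₂ t) := fun t =>
      (hiso (g t)).dist_eq (f₁ t) (f₂ t)
    simp only [this]
  · intro g f ε hε
    obtain ⟨W, hW, hWb⟩ := hbounded ε hε
    refine ⟨W, hW, fun g₁ hmeas => ?_⟩
    have hsub : {t : ℝ | ε < dist (g₁ t • f t) (g t • f t)} ⊆
        {t : ℝ | (g t)⁻¹ * g₁ t ∉ W} := by
      intro t ht
      simp only [Set.mem_setOf_eq] at ht ⊢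
      intro hw
      have := hWb _ hw (f t)
      have heq := (hiso (g t)).dist_eq (((g t)⁻¹ * g₁ t) • f t) (f t)
      simp only [smul_smul, mul_inv_cancel_left] at heq
      rw [heq.symm] at this
      exact absurd ht (not_lt.mpr this.le)
    have hlt : unitIntervalMeasure {t : ℝ | ε < dist (g₁ t • f t) (g t • f t)} <
        ENNReal.ofReal (lam * ε) := by
      calc unitIntervalMeasure {t : ℝ | ε < dist (g₁ t • f t) (g t • f t)}
          ≤ unitIntervalMeasure {t : ℝ | (g t)⁻¹ * g₁ t ∉ W} := measure_mono hsub
        _ < ENNReal.ofReal (lam * ε / 2) := hmeas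
        _ ≤ ENNReal.ofReal (lam * ε) := ENNReal.ofReal_le_ofReal (by nlinarith)
    have hmem : ε ∈ {ε' : ℝ | 0 < ε' ∧
        unitIntervalMeasure {x | ε' < dist (g₁ x • f x) (g x • f x)} <
          ENNReal.ofReal (lam * ε')} := ⟨hε, hlt⟩
    exact csInf_le ⟨0, fun y hy => hy.1.le⟩ hmem
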